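/- Let n ≥ 1, let L be an n×n real matrix, and let T be a real number. Then the repeated resolvent (implicit Euler) steps converge to the matrix exponential: the sequence of matrices ((I − (T/M)·L)⁻¹)^M converges to exp(T·L) as the natural number M tends to infinity. (For all sufficiently large M the matrix I − (T/M)·L is invertible, so the inverse is the genuine matrix inverse eventually.) -/

import Mathlib

open Filter NormedSpace

section Aux
variable {𝔸 : Type*} [NormedRing 𝔸] [NormedAlgebra ℝ 𝔸] [CompleteSpace 𝔸] [NormOneClass 𝔸]

lemma aux_term_le (t : 𝔸) (i : ℕ) : ‖(i.factorial⁻¹ : ℝ) • t ^ i‖ ≤ ‖t‖ ^ i / i.factorial := by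
  rw [norm_smul, norm_inv, Real.norm_natCast, div_eq_inv_mul]
  exact mul_le_mul le_rfl (norm_pow_le t i) (by positivity) (by positivity)

lemma aux_norm_exp_le (t : 𝔸) : ‖exp t‖ ≤ Real.exp ‖t‖ := by
  rw [exp_eq_tsum ℝ, Real.exp_eq_exp_ℝ, exp_eq_tsum_div]
  refine le_trans (norm_tsum_le_tsum_norm (norm_expSeries_summable' t)) ?_
  exact Summable.tsum_le_tsum (aux_term_le t) (norm_expSeries_summable' t)
    (Real.summable_pow_div_factorial ‖t‖)

lemma aux_exp_remainder (t : 𝔸) : ‖exp t - 1 - t‖ ≤ ‖t‖ ^ 2 * Real.exp ‖t‖ := by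
  have hs := expSeries_summable' (𝕂 := ℝ) t
  have h2 := Summable.sum_add_tsum_nat_add 2 hs
  have hrange : (∑ i ∈ Finset.range 2, ((i.factorial)⁻¹ : ℝ) • t ^ i) = 1 + t := by
    simp [Finset.sum_range_succ]
  rw [exp_eq_tsum ℝ]
  simp only []
  rw [← h2, hrange]
  have hkey : ‖∑' i : ℕ, (((i + 2).factorial)⁻¹ : ℝ) • t ^ (i + 2)‖ ≤ ‖t‖ ^ 2 * Real.exp ‖t‖ := by
    have hsum1 : Summable fun i : ℕ => ‖(((i + 2).factorial)⁻¹ : ℝ) • t ^ (i + 2)‖ :=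
      (summable_nat_add_iff 2).mpr (norm_expSeries_summable' t)
    refine le_trans (norm_tsum_le_tsum_norm hsum1) ?_
    have hsum2 : Summable fun i : ℕ => ‖t‖ ^ 2 * (‖t‖ ^ i / i.factorial) :=
      (Real.summable_pow_div_factorial ‖t‖).mul_left _
    refine le_trans (Summable.tsum_le_tsum (fun i => ?_) hsum1 hsum2) ?_
    · refine le_trans (aux_term_le t (i + 2)) ?_
      rw [pow_add, mul_comm (‖t‖ ^ i), mul_div_assoc]
      gcongr
      omega
    · rw [tsum_mul_left, Real.exp_eq_exp_ℝ, exp_eq_tsum_div]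
  calc ‖1 + t + (∑' i : ℕ, (((i + 2).factorial)⁻¹ : ℝ) • t ^ (i + 2)) - 1 - t‖
      = ‖∑' i : ℕ, (((i + 2).factorial)⁻¹ : ℝ) • t ^ (i + 2)‖ := by
        congr 1; abel
    _ ≤ _ := hkey
end Aux

section Aux3
variable {𝔸 : Type*} [NormedRing 𝔸] [NormedAlgebra ℝ 𝔸] [CompleteSpace 𝔸] [NormOneClass 𝔸]

omit [NormedAlgebra ℝ 𝔸] [CompleteSpace 𝔸] in
lemma aux_pow_sub_pow {a b : 𝔸} (h : Commute a b) {C : ℝ} (ha : ‖a‖ ≤ C) (hb : ‖b‖ ≤ C)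
    (M : ℕ) : ‖a ^ M - b ^ M‖ ≤ M * C ^ (M - 1) * ‖a - b‖ := by
  have hC : 0 ≤ C := le_trans (norm_nonneg a) ha
  rw [← h.geom_sum₂_mul]
  refine le_trans (norm_mul_le _ _) ?_
  gcongr
  refine le_trans (norm_sum_le _ _) ?_
  have hterm : ∀ i ∈ Finset.range M, ‖a ^ i * b ^ (M - 1 - i)‖ ≤ C ^ (M - 1) := by
    intro i hi
    rw [Finset.mem_range] at hi
    refine le_trans (norm_mul_le _ _) ?_
    calc ‖a ^ i‖ * ‖b ^ (M - 1 - i)‖ ≤ C ^ i * C ^ (M - 1 - i) :=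
          mul_le_mul (le_trans (norm_pow_le a i) (pow_le_pow_left₀ (norm_nonneg a) ha i))
            (le_trans (norm_pow_le b _) (pow_le_pow_left₀ (norm_nonneg b) hb _))
            (norm_nonneg _) (by positivity)
      _ = C ^ (M - 1) := by rw [← pow_add]; congr 1; omega
  refine le_trans (Finset.sum_le_sum hterm) ?_
  simp [Finset.sum_const, Finset.card_range, nsmul_eq_mul]
end Aux3

section Aux4
variable {𝔸 : Type*} [NormedRing 𝔸] [NormedAlgebra ℝ 𝔸] [CompleteSpace 𝔸] [NormOneClass 𝔸]

lemma aux_euler (x : 𝔸) :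
    Tendsto (fun M : ℕ => (1 + (M : ℝ)⁻¹ • x) ^ M) atTop (nhds (exp x)) := by
  letI : NormedAlgebra ℚ 𝔸 := NormedAlgebra.restrictScalars ℚ ℝ 𝔸
  rw [tendsto_iff_norm_sub_tendsto_zero]
  refine squeeze_zero' (Eventually.of_forall fun M => norm_nonneg _) ?_
    (tendsto_const_div_atTop_nhds_zero_nat (‖x‖ ^ 2 * Real.exp ‖x‖ * Real.exp ‖x‖))
  filter_upwards [eventually_ge_atTop 1] with M hM
  set t : 𝔸 := (M : ℝ)⁻¹ • x with ht
  have hMpos : (0 : ℝ) < M := by exact_mod_cast hM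
  have htn : ‖t‖ = (M : ℝ)⁻¹ * ‖x‖ := by rw [ht, norm_smul, norm_inv, Real.norm_natCast]
  have htx : ‖t‖ ≤ ‖x‖ := by
    rw [htn]
    calc (M : ℝ)⁻¹ * ‖x‖ ≤ 1 * ‖x‖ := by
          gcongr
          · exact inv_le_one_of_one_le₀ (by exact_mod_cast hM)
      _ = ‖x‖ := one_mul _
  have hexp : exp x = exp t ^ M := by
    rw [← exp_nsmul, ht, ← Nat.cast_smul_eq_nsmul ℝ, smul_smul,
      mul_inv_cancel₀ hMpos.ne', one_smul]
  have hcomm : Commute (1 + t) (exp t) :=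
    ((Commute.one_left t).add_left (Commute.refl t)).exp_right
  have hC1 : ‖(1 : 𝔸) + t‖ ≤ Real.exp ‖t‖ := by
    refine le_trans (norm_add_le _ _) ?_
    rw [norm_one]
    linarith [Real.add_one_le_exp ‖t‖]
  have hC2 : ‖exp t‖ ≤ Real.exp ‖t‖ := aux_norm_exp_le t
  have hCpow : Real.exp ‖t‖ ^ (M - 1) ≤ Real.exp ‖x‖ := by
    calc Real.exp ‖t‖ ^ (M - 1) ≤ Real.exp ‖t‖ ^ M :=
          pow_le_pow_right₀ (Real.one_le_exp (norm_nonneg t)) (Nat.sub_le M 1)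
      _ = Real.exp (M * ‖t‖) := (Real.exp_nat_mul _ M).symm
      _ = Real.exp ‖x‖ := by rw [htn]; congr 1; field_simp
  have hR : ‖(1 + t) - exp t‖ ≤ ((M : ℝ)⁻¹ * ‖x‖) ^ 2 * Real.exp ‖x‖ := by
    rw [norm_sub_rev]
    rw [sub_add_eq_sub_sub, ← htn]
    exact le_trans (aux_exp_remainder t) (by gcongr)
  calc ‖(1 + t) ^ M - exp x‖ = ‖(1 + t) ^ M - exp t ^ M‖ := by rw [hexp]
    _ ≤ M * Real.exp ‖t‖ ^ (M - 1) * ‖(1 + t) - exp t‖ := aux_pow_sub_pow hcomm hC1 hC2 M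
    _ ≤ M * Real.exp ‖x‖ * (((M : ℝ)⁻¹ * ‖x‖) ^ 2 * Real.exp ‖x‖) := by
        gcongr
    _ = ‖x‖ ^ 2 * Real.exp ‖x‖ * Real.exp ‖x‖ / M := by field_simp
end Aux4

theorem stmt_9 (n : ℕ) (hn : 1 ≤ n) (L : Matrix (Fin n) (Fin n) ℝ) (T : ℝ) :
    (∀ᶠ M : ℕ in atTop, IsUnit ((1 - (T / M) • L : Matrix (Fin n) (Fin n) ℝ))) ∧
    Tendsto (fun M : ℕ => (((1 - (T / M) • L : Matrix (Fin n) (Fin n) ℝ))⁻¹) ^ M)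
      atTop (nhds (NormedSpace.exp (T • L))) := by
  haveI : Nonempty (Fin n) := Fin.pos_iff_nonempty.mp hn
  letI : SeminormedRing (Matrix (Fin n) (Fin n) ℝ) := Matrix.linftyOpSemiNormedRing
  letI : NormedRing (Matrix (Fin n) (Fin n) ℝ) := Matrix.linftyOpNormedRing
  letI : NormedAlgebra ℝ (Matrix (Fin n) (Fin n) ℝ) := Matrix.linftyOpNormedAlgebra
  letI : NormOneClass (Matrix (Fin n) (Fin n) ℝ) := Matrix.linfty_opNormOneClass
  letI : NormedAlgebra ℚ (Matrix (Fin n) (Fin n) ℝ) :=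
    NormedAlgebra.restrictScalars ℚ ℝ (Matrix (Fin n) (Fin n) ℝ)
  set A : Matrix (Fin n) (Fin n) ℝ := T • L with hA
  have key : ∀ M : ℕ, (T / (M : ℝ)) • L = (M : ℝ)⁻¹ • A := fun M => by
    rw [hA, smul_smul, div_eq_mul_inv, mul_comm]
  have hnorm : Tendsto (fun M : ℕ => ‖(M : ℝ)⁻¹ • A‖) atTop (nhds 0) := by
    have h0 := (tendsto_inv_atTop_nhds_zero_nat (𝕜 := ℝ)).mul_const ‖A‖
    rw [zero_mul] at h0
    refine h0.congr fun M => ?_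
    rw [norm_smul ((M:ℝ)⁻¹) A, norm_inv, Real.norm_natCast]
  have hUnit : ∀ᶠ M : ℕ in atTop, IsUnit ((1 : Matrix (Fin n) (Fin n) ℝ) - (M : ℝ)⁻¹ • A) := by
    filter_upwards [hnorm.eventually_lt_const zero_lt_one] with M hM
    exact (Units.oneSub _ hM).isUnit
  constructor
  · refine hUnit.mono fun M hM => ?_
    rwa [key M]
  · have heuler := aux_euler (-A)
    have heuler' : Tendsto (fun M : ℕ => ((1 : Matrix (Fin n) (Fin n) ℝ) - (M : ℝ)⁻¹ • A) ^ M)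
        atTop (nhds (NormedSpace.exp (-A))) := by
      refine heuler.congr fun M => ?_
      rw [smul_neg, ← sub_eq_add_neg]
    have h1 : NormedSpace.exp (-A) * NormedSpace.exp A = 1 := by
      refine (NormedSpace.exp_add_of_commute (Commute.refl A).neg_left).symm.trans ?_
      rw [neg_add_cancel,
        NormedSpace.exp_zero]
    have h2 : NormedSpace.exp A * NormedSpace.exp (-A) = 1 := by
      refine (NormedSpace.exp_add_of_commute (Commute.refl A).neg_right).symm.trans ?_
      rw [add_neg_cancel,
        NormedSpace.exp_zero]
    set u : (Matrix (Fin n) (Fin n) ℝ)ˣ := ⟨NormedSpace.exp (-A), NormedSpace.exp A, h1, h2⟩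
      with hu
    have hinv : Ring.inverse (NormedSpace.exp (-A)) = NormedSpace.exp A := by
      have := Ring.inverse_unit u
      rwa [hu] at this
    have hcont : ContinuousAt Ring.inverse (NormedSpace.exp (-A)) :=
      NormedRing.inverse_continuousAt u
    have hmain : Tendsto
        (fun M : ℕ => Ring.inverse (((1 : Matrix (Fin n) (Fin n) ℝ) - (M : ℝ)⁻¹ • A) ^ M))
        atTop (nhds (NormedSpace.exp A)) := by
      have := hcont.tendsto.comp heuler'
      rwa [hinv] at this
    refine hmain.congr fun M => ?_
    rw [key M, Matrix.nonsing_inv_eq_ringInverse, Ring.inverse_pow]
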